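/- Let λ^s < 0 < λ^u and let ε > 0 satisfy 3ε < −λ^s and ε < λ^u. Let a, b : ℝ → ℝ satisfy, for all m ∈ ℝ and all ℓ ≥ 0: (λ^u − ε)ℓ ≤ a(m + ℓ) − a(m) ≤ (λ^u + ε)ℓ and (λ^s − ε)ℓ ≤ b(m + ℓ) − b(m) ≤ (λ^s + ε)ℓ. Fix c ∈ ℝ and define τ(m) = sup { ℓ ∈ ℝ : b(m) + a(m + ℓ) − a(m) ≤ c } and L(m) = m + τ(m). Then τ(m) is a well-defined real number for every m, and for all m ∈ ℝ and ℓ ≥ 0: ((−λ^s − 3ε)/(λ^u + ε))·ℓ ≤ τ(m + ℓ) − τ(m) ≤ ((−λ^s + 3ε)/(λ^u − ε))·ℓ, and ((λ^u − λ^s − 2ε)/(λ^u + ε))·ℓ ≤ L(m + ℓ) − L(m) ≤ ((λ^u − λ^s + 2ε)/(λ^u − ε))·ℓ. In particular τ and L are bi-Lipschitz increasing homeomorphisms of ℝ. -/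

import Mathlib

/-- Stopping-time estimates: let `λˢ < 0 < λᵘ` and `ε > 0` with `3ε < −λˢ`
and `ε < λᵘ`.  Suppose `a, b : ℝ → ℝ` satisfy `(λᵘ − ε)ℓ ≤ a(m+ℓ) − a(m) ≤ (λᵘ + ε)ℓ` and
`(λˢ − ε)ℓ ≤ b(m+ℓ) − b(m) ≤ (λˢ + ε)ℓ` for all `m` and `ℓ ≥ 0`.  Fix `c` and let
`τ(m) = sup {ℓ | b m + a(m+ℓ) − a m ≤ c}`, `L(m) = m + τ(m)`.  Then `τ(m)` is a well-defined
real (the defining set is nonempty and bounded above), the stated bi-Lipschitz bounds hold for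
`τ` and `L`, and in particular `τ` and `L` are (strictly) increasing homeomorphisms of `ℝ`. -/
theorem stopping_time_biLipschitz
    (ls lu ε : ℝ) (hls : ls < 0) (hlu : 0 < lu) (hε : 0 < ε)
    (hε1 : 3 * ε < -ls) (hε2 : ε < lu)
    (a b : ℝ → ℝ)
    (ha : ∀ m ℓ : ℝ, 0 ≤ ℓ →
      (lu - ε) * ℓ ≤ a (m + ℓ) - a m ∧ a (m + ℓ) - a m ≤ (lu + ε) * ℓ)
    (hb : ∀ m ℓ : ℝ, 0 ≤ ℓ →
      (ls - ε) * ℓ ≤ b (m + ℓ) - b m ∧ b (m + ℓ) - b m ≤ (ls + ε) * ℓ)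
    (c : ℝ) (τ L : ℝ → ℝ)
    (hτ : ∀ m, τ m = sSup {ℓ : ℝ | b m + (a (m + ℓ) - a m) ≤ c})
    (hL : ∀ m, L m = m + τ m) :
    (∀ m : ℝ, {ℓ : ℝ | b m + (a (m + ℓ) - a m) ≤ c}.Nonempty ∧
      BddAbove {ℓ : ℝ | b m + (a (m + ℓ) - a m) ≤ c}) ∧
    (∀ m ℓ : ℝ, 0 ≤ ℓ →
      ((-ls - 3 * ε) / (lu + ε)) * ℓ ≤ τ (m + ℓ) - τ m ∧
      τ (m + ℓ) - τ m ≤ ((-ls + 3 * ε) / (lu - ε)) * ℓ ∧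
      ((lu - ls - 2 * ε) / (lu + ε)) * ℓ ≤ L (m + ℓ) - L m ∧
      L (m + ℓ) - L m ≤ ((lu - ls + 2 * ε) / (lu - ε)) * ℓ) ∧
    StrictMono τ ∧ Function.Surjective τ ∧ Continuous τ ∧
    StrictMono L ∧ Function.Surjective L ∧ Continuous L := by
  have hlum : (0:ℝ) < lu - ε := by linarith
  have hlup : (0:ℝ) < lu + ε := by linarith
  -- two-sided bounds for `a` in endpoint form
  have ha' : ∀ x y : ℝ, x ≤ y →
      (lu - ε) * (y - x) ≤ a y - a x ∧ a y - a x ≤ (lu + ε) * (y - x) := by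
    intro x y hxy
    have h := ha x (y - x) (by linarith)
    have e : x + (y - x) = y := by ring
    rw [e] at h
    exact h
  -- Lipschitz bound for a
  have halip : ∀ x y : ℝ, |a x - a y| ≤ (lu + ε) * |x - y| := by
    intro x y
    rcases le_total x y with h | h
    · have h1 := ha' x y h
      have h0 : (0:ℝ) ≤ (lu - ε) * (y - x) := mul_nonneg hlum.le (by linarith)
      rw [abs_sub_comm, abs_of_nonneg (by linarith : (0:ℝ) ≤ a y - a x),
        abs_sub_comm x y, abs_of_nonneg (by linarith : (0:ℝ) ≤ y - x)]
      linarith [h1.2]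
    · have h1 := ha' y x h
      have h0 : (0:ℝ) ≤ (lu - ε) * (x - y) := mul_nonneg hlum.le (by linarith)
      rw [abs_of_nonneg (by linarith : (0:ℝ) ≤ a x - a y),
        abs_of_nonneg (by linarith : (0:ℝ) ≤ x - y)]
      linarith [h1.2]
  have hacont : Continuous a := by
    have : LipschitzWith (Real.toNNReal (lu + ε)) a := by
      apply LipschitzWith.of_dist_le_mul
      intro x y
      rw [Real.dist_eq, Real.dist_eq, Real.coe_toNNReal _ hlup.le]
      exact halip x y
    exact this.continuous
  -- the defining set is nonempty and bounded above
  have hS : ∀ m : ℝ, {ℓ : ℝ | b m + (a (m + ℓ) - a m) ≤ c}.Nonempty ∧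
      BddAbove {ℓ : ℝ | b m + (a (m + ℓ) - a m) ≤ c} := by
    intro m
    constructor
    · refine ⟨min 0 ((c - b m) / (lu - ε)), ?_⟩
      set ℓ := min 0 ((c - b m) / (lu - ε)) with hℓdef
      have hl0 : ℓ ≤ 0 := min_le_left _ _
      have h2 : ℓ ≤ (c - b m) / (lu - ε) := min_le_right _ _
      have h3 : (lu - ε) * ℓ ≤ c - b m := by
        rw [le_div_iff₀ hlum] at h2; linarith [h2]
      have h4 := (ha' (m + ℓ) m (by linarith)).1
      have e : m - (m + ℓ) = -ℓ := by ring
      rw [e] at h4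
      show b m + (a (m + ℓ) - a m) ≤ c
      nlinarith [h4, h3]
    · refine ⟨max 0 ((c - b m) / (lu - ε)), ?_⟩
      intro ℓ hℓ
      by_contra hcon
      push_neg at hcon
      have hl0 : (0:ℝ) ≤ ℓ := le_of_lt (lt_of_le_of_lt (le_max_left _ _) hcon)
      have h4 := (ha m ℓ hl0).1
      have h2 : (c - b m) / (lu - ε) < ℓ := lt_of_le_of_lt (le_max_right _ _) hcon
      have h3 : c - b m < (lu - ε) * ℓ := by
        rw [div_lt_iff₀ hlum] at h2; linarith [h2]
      have hmem : b m + (a (m + ℓ) - a m) ≤ c := hℓ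
      linarith
  -- equality at the stopping time
  have hτS : ∀ m : ℝ, b m + (a (m + τ m) - a m) = c := by
    intro m
    have hne := (hS m).1
    have hbd := (hS m).2
    have hclosed : IsClosed {ℓ : ℝ | b m + (a (m + ℓ) - a m) ≤ c} := by
      have : Continuous fun ℓ : ℝ => b m + (a (m + ℓ) - a m) := by
        apply Continuous.add continuous_const
        exact (hacont.comp (continuous_const.add continuous_id)).sub continuous_const
      exact isClosed_le this continuous_const
    have hmem : b m + (a (m + τ m) - a m) ≤ c := by
      have := hclosed.csSup_mem hne hbd
      rw [← hτ m] at this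
      exact this
    by_contra hne'
    have hlt : b m + (a (m + τ m) - a m) < c := lt_of_le_of_ne hmem hne'
    set δ := (c - (b m + (a (m + τ m) - a m))) / (lu + ε) with hδdef
    have hδ : 0 < δ := div_pos (by linarith) hlup
    have hδeq : (lu + ε) * δ = c - (b m + (a (m + τ m) - a m)) := by
      rw [hδdef, mul_comm]
      exact div_mul_cancel₀ _ hlup.ne'
    have hmem2 : τ m + δ ∈ {ℓ : ℝ | b m + (a (m + ℓ) - a m) ≤ c} := by
      have h1 := (ha' (m + τ m) (m + (τ m + δ)) (by linarith)).2
      have e : (m + (τ m + δ)) - (m + τ m) = δ := by ring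
      rw [e] at h1
      show b m + (a (m + (τ m + δ)) - a m) ≤ c
      linarith
    have hle := le_csSup hbd hmem2
    rw [← hτ m] at hle
    linarith
  -- main estimates
  have main : ∀ m ℓ : ℝ, 0 ≤ ℓ →
      ((-ls - 3 * ε) / (lu + ε)) * ℓ ≤ τ (m + ℓ) - τ m ∧
      τ (m + ℓ) - τ m ≤ ((-ls + 3 * ε) / (lu - ε)) * ℓ ∧
      ((lu - ls - 2 * ε) / (lu + ε)) * ℓ ≤ L (m + ℓ) - L m ∧
      L (m + ℓ) - L m ≤ ((lu - ls + 2 * ε) / (lu - ε)) * ℓ := by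
    intro m ℓ hℓ
    have e1 := hτS m
    have e2 := hτS (m + ℓ)
    have hab := ha m ℓ hℓ
    have hbb := hb m ℓ hℓ
    -- difference of a at the hitting points
    have aLd : a ((m + ℓ) + τ (m + ℓ)) - a (m + τ m)
        = (a (m + ℓ) - a m) - (b (m + ℓ) - b m) := by linarith
    have hlow : (lu - ls - 2 * ε) * ℓ ≤ a ((m + ℓ) + τ (m + ℓ)) - a (m + τ m) := by
      rw [aLd]; linarith [hab.1, hbb.2]
    have hhigh : a ((m + ℓ) + τ (m + ℓ)) - a (m + τ m) ≤ (lu - ls + 2 * ε) * ℓ := by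
      rw [aLd]; linarith [hab.2, hbb.1]
    have hcoef : (0:ℝ) ≤ (lu - ls - 2 * ε) * ℓ := mul_nonneg (by linarith) hℓ
    have hLle : m + τ m ≤ (m + ℓ) + τ (m + ℓ) := by
      by_contra hcon
      push_neg at hcon
      have h1 := (ha' ((m + ℓ) + τ (m + ℓ)) (m + τ m) hcon.le).1
      have h2 : (0:ℝ) < (lu - ε) * ((m + τ m) - ((m + ℓ) + τ (m + ℓ))) :=
        mul_pos hlum (by linarith)
      linarith
    have had := ha' (m + τ m) ((m + ℓ) + τ (m + ℓ)) hLle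
    have hd1 : (lu - ls - 2 * ε) * ℓ ≤ (lu + ε) * (((m + ℓ) + τ (m + ℓ)) - (m + τ m)) := by
      linarith [had.2]
    have hd2 : (lu - ε) * (((m + ℓ) + τ (m + ℓ)) - (m + τ m)) ≤ (lu - ls + 2 * ε) * ℓ := by
      linarith [had.1]
    refine ⟨?_, ?_, ?_, ?_⟩
    · rw [div_mul_eq_mul_div, div_le_iff₀ hlup]
      nlinarith [hd1]
    · rw [div_mul_eq_mul_div, le_div_iff₀ hlum]
      nlinarith [hd2]
    · rw [hL, hL, div_mul_eq_mul_div, div_le_iff₀ hlup]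
      nlinarith [hd1]
    · rw [hL, hL, div_mul_eq_mul_div, le_div_iff₀ hlum]
      nlinarith [hd2]
  -- strict monotonicity of τ
  have hKpos : (0:ℝ) < (-ls - 3 * ε) / (lu + ε) := div_pos (by linarith) hlup
  have τmono : StrictMono τ := by
    intro x y hxy
    have h := (main x (y - x) (by linarith)).1
    have e : x + (y - x) = y := by ring
    rw [e] at h
    have : (0:ℝ) < ((-ls - 3 * ε) / (lu + ε)) * (y - x) :=
      mul_pos hKpos (by linarith)
    linarith
  -- Lipschitz bound for τ
  have hK2 : (0:ℝ) ≤ (-ls + 3 * ε) / (lu - ε) := div_nonneg (by linarith) hlum.le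
  have τlip : ∀ x y : ℝ, |τ x - τ y| ≤ ((-ls + 3 * ε) / (lu - ε)) * |x - y| := by
    have key : ∀ x y : ℝ, x ≤ y → |τ y - τ x| ≤ ((-ls + 3 * ε) / (lu - ε)) * |y - x| := by
      intro x y hxy
      have h := main x (y - x) (by linarith)
      have e : x + (y - x) = y := by ring
      rw [e] at h
      have hnn : (0:ℝ) ≤ τ y - τ x := by
        have := h.1
        have h0 : (0:ℝ) ≤ ((-ls - 3 * ε) / (lu + ε)) * (y - x) :=
          mul_nonneg hKpos.le (by linarith)
        linarith
      rw [abs_of_nonneg hnn, abs_of_nonneg (by linarith : (0:ℝ) ≤ y - x)]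
      exact h.2.1
    intro x y
    rcases le_total x y with h | h
    · rw [abs_sub_comm, abs_sub_comm x y]; exact key x y h
    · exact key y x h
  have τcont : Continuous τ := by
    have : LipschitzWith (Real.toNNReal ((-ls + 3 * ε) / (lu - ε))) τ := by
      apply LipschitzWith.of_dist_le_mul
      intro x y
      rw [Real.dist_eq, Real.dist_eq, Real.coe_toNNReal _ hK2]
      exact τlip x y
    exact this.continuous
  -- tendsto at top / at bot
  have τtop : Filter.Tendsto τ Filter.atTop Filter.atTop := by
    apply Filter.tendsto_atTop_mono'
      (f₁ := fun m : ℝ => τ 0 + ((-ls - 3 * ε) / (lu + ε)) * m)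
    · filter_upwards [Filter.eventually_ge_atTop (0:ℝ)] with m hm
      have h := (main 0 m hm).1
      have e : (0:ℝ) + m = m := by ring
      rw [e] at h
      show τ 0 + (-ls - 3 * ε) / (lu + ε) * m ≤ τ m
      linarith
    · exact Filter.tendsto_atTop_add_const_left _ _
        (Filter.Tendsto.const_mul_atTop hKpos Filter.tendsto_id)
  have τbot : Filter.Tendsto τ Filter.atBot Filter.atBot := by
    apply Filter.tendsto_atBot_mono'
      (f₁ := fun m : ℝ => τ 0 + ((-ls - 3 * ε) / (lu + ε)) * m)
    · filter_upwards [Filter.eventually_le_atBot (0:ℝ)] with m hm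
      have h := (main m (-m) (by linarith)).1
      have e : m + (-m) = (0:ℝ) := by ring
      rw [e] at h
      show τ m ≤ τ 0 + (-ls - 3 * ε) / (lu + ε) * m
      nlinarith [h]
    · apply Filter.tendsto_atBot_add_const_left
      exact Filter.Tendsto.const_mul_atBot hKpos Filter.tendsto_id
  have τsurj : Function.Surjective τ := τcont.surjective τtop τbot
  -- L
  have hLfun : L = fun m => m + τ m := funext hL
  have Lmono : StrictMono L := by
    rw [hLfun]; exact fun x y hxy => by
      have := τmono hxy; simp only; linarith
  have Lcont : Continuous L := by
    rw [hLfun]; exact continuous_id.add τcont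
  have Ltop : Filter.Tendsto L Filter.atTop Filter.atTop := by
    rw [hLfun]; exact Filter.Tendsto.atTop_add_atTop Filter.tendsto_id τtop
  have Lbot : Filter.Tendsto L Filter.atBot Filter.atBot := by
    rw [hLfun]; exact Filter.Tendsto.atBot_add_atBot Filter.tendsto_id τbot
  have Lsurj : Function.Surjective L := Lcont.surjective Ltop Lbot
  exact ⟨hS, main, τmono, τsurj, τcont, Lmono, Lsurj, Lcont⟩
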